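/- Let F be a field of characteristic zero and let K1, K2, K1′, K2′ ∈ F be nonzero elements with K1² + (K1′)² = 1 and K2² + (K2′)² = 1. Set A = ((K1′)² + (K2′)²)/(K1′K2′), B = −((K1K2′)² + (K1′K2)²)/(K1K2K1′K2′), and C = (K1² + K2²)/(K1K2). Then A² + B² + C² + A·B·C = 4; that is, the parameters (A, B, C, D = 0) satisfy the Göpel–Hudson relation D² = A² + B² + C² + ABC − 4. -/

import Mathlib

/-- with `Λ_l = K_l² = 1 − (K_l′)²`, the parameters
`A = ((K₁′)²+(K₂′)²)/(K₁′K₂′)`, `B = −(((K₁K₂′)²+(K₁′K₂)²)/(K₁K₂K₁′K₂′))`,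
`C = (K₁²+K₂²)/(K₁K₂)`, `D = 0` satisfy the Göpel–Hudson relation
`D² = A² + B² + C² + ABC − 4`. -/
theorem stmt_4 (F : Type*) [Field F] [CharZero F] (K1 K2 K1' K2' : F)
    (h1 : K1 ≠ 0) (h2 : K2 ≠ 0) (h3 : K1' ≠ 0) (h4 : K2' ≠ 0)
    (e1 : K1 ^ 2 + K1' ^ 2 = 1) (e2 : K2 ^ 2 + K2' ^ 2 = 1)
    (A B C : F)
    (hA : A = (K1' ^ 2 + K2' ^ 2) / (K1' * K2'))
    (hB : B = -(((K1 * K2') ^ 2 + (K1' * K2) ^ 2) / (K1 * K2 * K1' * K2')))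
    (hC : C = (K1 ^ 2 + K2 ^ 2) / (K1 * K2)) :
    A ^ 2 + B ^ 2 + C ^ 2 + A * B * C = 4 ∧
    (0 : F) ^ 2 = A ^ 2 + B ^ 2 + C ^ 2 + A * B * C - 4 := by
  have hd : (K1 * K2 * K1' * K2') ≠ 0 :=
    mul_ne_zero (mul_ne_zero (mul_ne_zero h1 h2) h3) h4
  have key : A ^ 2 + B ^ 2 + C ^ 2 + A * B * C = 4 := by
    subst hA hB hC
    have expand : ((K1' ^ 2 + K2' ^ 2) / (K1' * K2')) ^ 2 +
        (-(((K1 * K2') ^ 2 + (K1' * K2) ^ 2) / (K1 * K2 * K1' * K2'))) ^ 2 +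
        ((K1 ^ 2 + K2 ^ 2) / (K1 * K2)) ^ 2 +
        ((K1' ^ 2 + K2' ^ 2) / (K1' * K2')) *
        (-(((K1 * K2') ^ 2 + (K1' * K2) ^ 2) / (K1 * K2 * K1' * K2'))) *
        ((K1 ^ 2 + K2 ^ 2) / (K1 * K2))
        = ((K1 * K2 * (K1' ^ 2 + K2' ^ 2)) ^ 2
           + ((K1 * K2') ^ 2 + (K1' * K2) ^ 2) ^ 2
           + (K1' * K2' * (K1 ^ 2 + K2 ^ 2)) ^ 2
           - (K1' ^ 2 + K2' ^ 2) * ((K1 * K2') ^ 2 + (K1' * K2) ^ 2) * (K1 ^ 2 + K2 ^ 2))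
          / (K1 * K2 * K1' * K2') ^ 2 := by
      field_simp
      ring_nf
    rw [expand, div_eq_iff (pow_ne_zero _ hd)]
    ring
  exact ⟨key, by rw [key]; ring⟩
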